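/- Suppose p₁,…,p₂ₙ are nonzero vectors in ℍ^{n,1} whose Gram matrix (gᵢⱼ) = (⟨pᵢ, pⱼ⟩) is normalized, meaning g₁₂ = g₁₃ = g₁₄ = 1 and |g₂₃| = 1, g₃ⱼ = 1 for 5 ≤ j ≤ n+2, and g₁ₖ = 1 for n+3 ≤ k ≤ 2n. If the rescaled lifts p₁λ₁, …, p₂ₙλ₂ₙ (λᵢ ∈ ℍ \ {0}) also have a normalized Gram matrix, then λ₁ = λ₂ = ⋯ = λ₂ₙ and |λ₁| = 1. -/

import Mathlib

open Matrix

/-- The standard Hermitian form of signature `(n,1)` on `ℍ^{n+1}`: ones at positions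
`(1, n+1)` and `(n+1, 1)` and an identity block in the middle. -/
noncomputable def stdH (n : ℕ) : Matrix (Fin (n + 1)) (Fin (n + 1)) (Quaternion ℝ) :=
  fun i j =>
    if (i.val = 0 ∧ j.val = n) ∨ (i.val = n ∧ j.val = 0) ∨
        (i = j ∧ i.val ≠ 0 ∧ i.val ≠ n) then 1 else 0

/-- The quaternionic Hermitian pairing `⟨z, w⟩ = w* H z`. -/
noncomputable def qherm {n : ℕ} (H : Matrix (Fin n) (Fin n) (Quaternion ℝ))
    (z w : Fin n → Quaternion ℝ) : Quaternion ℝ :=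
  dotProduct (star w) (H.mulVec z)

/-- The normalization conditions on the Gram matrix `gᵢⱼ = ⟨pᵢ,pⱼ⟩` of the
(1-indexed) tuple `p₁,…,p₂ₙ`: `g₁₂ = g₁₃ = g₁₄ = 1`, `|g₂₃| = 1`, `g₃ⱼ = 1` for
`5 ≤ j ≤ n+2`, and `g₁ₖ = 1` for `n+3 ≤ k ≤ 2n`. -/
def NormalizedGram (n : ℕ) (p : ℕ → Fin (n + 1) → Quaternion ℝ) : Prop :=
  qherm (stdH n) (p 1) (p 2) = 1 ∧ qherm (stdH n) (p 1) (p 3) = 1 ∧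
  qherm (stdH n) (p 1) (p 4) = 1 ∧ ‖qherm (stdH n) (p 2) (p 3)‖ = 1 ∧
  (∀ j : ℕ, 5 ≤ j → j ≤ n + 2 → qherm (stdH n) (p 3) (p j) = 1) ∧
  (∀ k : ℕ, n + 3 ≤ k → k ≤ 2 * n → qherm (stdH n) (p 1) (p k) = 1)

lemma qherm_rescale {n : ℕ} (H : Matrix (Fin n) (Fin n) (Quaternion ℝ))
    (z w : Fin n → Quaternion ℝ) (a b : Quaternion ℝ) :
    qherm H (fun k => z k * a) (fun k => w k * b) = star b * qherm H z w * a := by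
  simp only [qherm, dotProduct, Matrix.mulVec, Pi.star_apply, StarMul.star_mul,
    Finset.mul_sum, Finset.sum_mul, mul_assoc]

/-- if the Gram matrices of `p₁,…,p₂ₙ` and of the rescaled lifts
`p₁λ₁,…,p₂ₙλ₂ₙ` are both normalized, then all the `λᵢ` are equal and `|λ₁| = 1`. -/
theorem normalized_gram_rescaling (n : ℕ) (hn : 3 ≤ n)
    (p : ℕ → Fin (n + 1) → Quaternion ℝ)
    (hp : ∀ i : ℕ, 1 ≤ i → i ≤ 2 * n → p i ≠ 0)
    (lam : ℕ → Quaternion ℝ) (hlam : ∀ i : ℕ, 1 ≤ i → i ≤ 2 * n → lam i ≠ 0)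
    (hG : NormalizedGram n p)
    (hG' : NormalizedGram n (fun i => fun j => p i j * lam i)) :
    (∀ i j : ℕ, 1 ≤ i → i ≤ 2 * n → 1 ≤ j → j ≤ 2 * n → lam i = lam j) ∧
      ‖lam 1‖ = 1 := by
  obtain ⟨g12, g13, g14, g23, g3j, g1k⟩ := hG
  obtain ⟨h12, h13, h14, h23, h3j, h1k⟩ := hG'
  rw [qherm_rescale, g12, mul_one] at h12
  rw [qherm_rescale, g13, mul_one] at h13
  rw [qherm_rescale, g14, mul_one] at h14
  rw [qherm_rescale] at h23
  have hl1 : lam 1 ≠ 0 := hlam 1 le_rfl (by omega)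
  have hl23 : lam 2 = lam 3 :=
    star_injective (mul_right_cancel₀ hl1 (h12.trans h13.symm))
  -- norm of lam 2 is 1
  have hn2 : ‖lam 2‖ = 1 := by
    rw [norm_mul, norm_mul, norm_star, g23, mul_one, ← hl23] at h23
    have h0 : (0:ℝ) ≤ ‖lam 2‖ := norm_nonneg _
    nlinarith
  have hs2 : star (lam 2) * lam 2 = 1 := by
    have := Quaternion.star_mul_self (lam 2)
    rw [this, Quaternion.normSq_eq_norm_mul_self, hn2]
    norm_num
  have hs2' : star (lam 2) ≠ 0 := star_ne_zero.mpr (hlam 2 (by omega) (by omega))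
  have hl12 : lam 1 = lam 2 := mul_left_cancel₀ hs2' (h12.trans hs2.symm)
  have hn1 : ‖lam 1‖ = 1 := by rw [hl12]; exact hn2
  have hs1 : star (lam 1) * lam 1 = 1 := by rw [hl12]; exact hs2
  -- generic step: star a * lam 1 = 1 → a = lam 1
  have key : ∀ a : Quaternion ℝ, star a * lam 1 = 1 → a = lam 1 := by
    intro a ha
    exact star_injective (mul_right_cancel₀ hl1 (ha.trans hs1.symm))
  have hl13 : lam 3 = lam 1 := by rw [← hl23, ← hl12]
  have main : ∀ i : ℕ, 1 ≤ i → i ≤ 2 * n → lam i = lam 1 := by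
    intro i hi1 hi2
    rcases Nat.lt_or_ge i 5 with h5 | h5
    · interval_cases i
      · rfl
      · exact hl12.symm
      · exact hl13
      · exact key _ h14
    · rcases le_or_gt i (n + 2) with hmid | hmid
      · have h := h3j i h5 hmid
        rw [qherm_rescale, g3j i h5 hmid, mul_one, hl13] at h
        exact key _ h
      · have h := h1k i (by omega) hi2
        rw [qherm_rescale, g1k i (by omega) hi2, mul_one] at h
        exact key _ h
  exact ⟨fun i j hi1 hi2 hj1 hj2 => (main i hi1 hi2).trans (main j hj1 hj2).symm, hn1⟩
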